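/- arXiv:2207.07046 — 2 statements merged into one kernel-verified Lean document; each statement's English description precedes it below -/
import Mathlib

section
/- For every integer m ≥ 4, the number of 4-tuples (a,b,c,d) of elements of {1,...,m} satisfying a < c < m, b < d < m, b ≠ c, a ≠ d, a ≠ b, and c ≠ d equals (m-1)(m-2)(m-3)(m-4)/4. -/
open Finset in

lemma pairlt (s : Finset ℕ) :
    ((s ×ˢ s).filter (fun p => p.1 < p.2)).card * 2 = s.card * (s.card - 1) := by
  have hunion : (s ×ˢ s).filter (fun p => p.1 < p.2) ∪ (s ×ˢ s).filter (fun p => p.2 < p.1)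
      = s.offDiag := by
    ext ⟨x, y⟩
    simp only [mem_union, mem_filter, mem_product, mem_offDiag]
    constructor
    · rintro (⟨⟨hx, hy⟩, h⟩ | ⟨⟨hx, hy⟩, h⟩) <;> exact ⟨hx, hy, by omega⟩
    · rintro ⟨hx, hy, h⟩
      rcases Nat.lt_or_ge x y with h' | h'
      · exact Or.inl ⟨⟨hx, hy⟩, h'⟩
      · exact Or.inr ⟨⟨hx, hy⟩, by omega⟩
  have hdisj : Disjoint ((s ×ˢ s).filter (fun p => p.1 < p.2))
      ((s ×ˢ s).filter (fun p => p.2 < p.1)) := by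
    rw [Finset.disjoint_left]
    intro p hp hq
    simp only [mem_filter] at hp hq
    omega
  have hswap : ((s ×ˢ s).filter (fun p => p.2 < p.1)).card
      = ((s ×ˢ s).filter (fun p => p.1 < p.2)).card := by
    apply Finset.card_bij' (fun p _ => p.swap) (fun p _ => p.swap) <;>
      (intro p hp; first
        | rfl
        | (simp only [mem_filter, mem_product] at hp ⊢; exact ⟨⟨hp.1.2, hp.1.1⟩, hp.2⟩))
  have h := Finset.card_union_of_disjoint hdisj
  rw [hunion, hswap, Finset.offDiag_card] at h
  cases hn : s.card with
  | zero => rw [hn] at h; omega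
  | succ n =>
    rw [hn, Nat.mul_succ, Nat.add_sub_cancel] at h
    simp [Nat.succ_sub_one]
    linarith


open Finset in
/-- The number of 4-tuples `(a,b,c,d)` in `{1,...,m}` with `a < c < m`, `b < d < m`,
`b ≠ c`, `a ≠ d`, `a ≠ b`, `c ≠ d` equals `(m-1)(m-2)(m-3)(m-4)/4`. -/
theorem stmt_2 (m : ℕ) (hm : 4 ≤ m) :
    (((Icc 1 m ×ˢ Icc 1 m) ×ˢ (Icc 1 m ×ˢ Icc 1 m)).filter
        (fun q => q.1.1 < q.2.1 ∧ q.2.1 < m ∧ q.1.2 < q.2.2 ∧ q.2.2 < m ∧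
          q.1.2 ≠ q.2.1 ∧ q.1.1 ≠ q.2.2 ∧ q.1.1 ≠ q.1.2 ∧ q.2.1 ≠ q.2.2)).card
      = (m - 1) * (m - 2) * (m - 3) * (m - 4) / 4 := by
  set S := (((Icc 1 m ×ˢ Icc 1 m) ×ˢ (Icc 1 m ×ˢ Icc 1 m)).filter
        (fun q => q.1.1 < q.2.1 ∧ q.2.1 < m ∧ q.1.2 < q.2.2 ∧ q.2.2 < m ∧
          q.1.2 ≠ q.2.1 ∧ q.1.1 ≠ q.2.2 ∧ q.1.1 ≠ q.1.2 ∧ q.2.1 ≠ q.2.2)) with hS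
  set P := ((Icc 1 m) ×ˢ (Icc 1 m)).filter (fun p => p.1 < p.2 ∧ p.2 < m) with hPdef
  have hmap : ∀ q ∈ S, (q.1.1, q.2.1) ∈ P := by
    intro q hq
    simp only [hS, mem_filter, mem_product] at hq
    simp only [hPdef, mem_filter, mem_product]
    exact ⟨⟨hq.1.1.1, hq.1.2.1⟩, hq.2.1, hq.2.2.1⟩
  rw [Finset.card_eq_sum_card_fiberwise hmap]
  -- each fiber has the same cardinality E
  obtain ⟨B, hB⟩ : ∃ B, (m - 3) * (m - 4) = 2 * B := by
    have h := Nat.even_mul_succ_self (m - 4)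
    have h1 : m - 4 + 1 = m - 3 := by omega
    rw [h1] at h
    obtain ⟨B, hB'⟩ := h
    exact ⟨B, by rw [mul_comm]; omega⟩
  have hfib : ∀ p ∈ P, (S.filter (fun q => (q.1.1, q.2.1) = p)).card = B := by
    rintro ⟨a, c⟩ hp
    simp only [hPdef, mem_filter, mem_product, mem_Icc] at hp
    obtain ⟨⟨⟨ha1, ham⟩, ⟨hc1, hcm'⟩⟩, hac, hcm⟩ := hp
    set t := ((Ico 1 m).erase a).erase c with ht
    have hmem : ∀ x, x ∈ t ↔ (x ≠ c ∧ x ≠ a ∧ 1 ≤ x ∧ x < m) := by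
      intro x; simp [ht, mem_erase, mem_Ico, and_assoc]
    have key : (S.filter (fun q => (q.1.1, q.2.1) = (a, c))).card
        = ((t ×ˢ t).filter (fun r => r.1 < r.2)).card := by
      refine Finset.card_bij' (fun q _ => (q.1.2, q.2.2)) (fun r _ => ((a, r.1), (c, r.2)))
        ?hi ?hj ?li ?ri
      case hi =>
        intro q hq
        simp only [mem_filter, hS, mem_product, mem_Icc, Prod.mk.injEq] at hq
        obtain ⟨⟨⟨⟨⟨_, _⟩, ⟨_, hb⟩⟩, ⟨_, _⟩, ⟨_, hd⟩⟩, h1, h2, h3, h4, h5, h6, h7, h8⟩, he1, he2⟩ := hq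
        simp only [mem_filter, mem_product, hmem]
        refine ⟨⟨⟨?_, ?_, ?_, ?_⟩, ⟨?_, ?_, ?_, ?_⟩⟩, h3⟩ <;> omega
      case hj =>
        intro r hr
        simp only [mem_filter, mem_product, hmem] at hr
        obtain ⟨⟨⟨hb1, hb2, hb3, hb4⟩, ⟨hd1, hd2, hd3, hd4⟩⟩, hbd⟩ := hr
        rw [mem_filter]
        refine ⟨?_, rfl⟩
        simp only [hS, mem_filter, mem_product, mem_Icc]
        refine ⟨⟨⟨⟨?_, ?_⟩, ?_, ?_⟩, ⟨?_, ?_⟩, ?_, ?_⟩, ?_, ?_, ?_, ?_, ?_, ?_, ?_, ?_⟩ <;> omega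
      case li =>
        rintro ⟨⟨q11, q12⟩, ⟨q21, q22⟩⟩ hq
        have h := (mem_filter.mp hq).2
        simp only [Prod.mk.injEq] at h
        obtain ⟨h1, h2⟩ := h
        simp [h1, h2]
      case ri =>
        intro r hr; rfl
    have htcard : t.card = m - 3 := by
      have h1 : a ∈ Ico 1 m := by simp [mem_Ico]; omega
      have h2 : c ∈ (Ico 1 m).erase a := by simp [mem_erase, mem_Ico]; omega
      rw [ht, card_erase_of_mem h2, card_erase_of_mem h1, Nat.card_Ico]
      omega
    have hpl := pairlt t
    rw [htcard] at hpl
    have : (m - 3) - 1 = m - 4 := by omega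
    rw [this, hB] at hpl
    rw [key]; omega
  rw [Finset.sum_congr rfl hfib, Finset.sum_const, smul_eq_mul]
  -- card of P
  have hPeq : P = ((Ico 1 m) ×ˢ (Ico 1 m)).filter (fun p => p.1 < p.2) := by
    ext ⟨x, y⟩
    simp only [hPdef, mem_filter, mem_product, mem_Icc, mem_Ico]
    omega
  have hP : P.card * 2 = (m - 1) * (m - 2) := by
    rw [hPeq]
    have := pairlt (Ico 1 m)
    rw [Nat.card_Ico] at this
    have h2 : (m - 1) - 1 = m - 2 := by omega
    rw [h2] at this
    exact this
  have hnum : (m - 1) * (m - 2) * (m - 3) * (m - 4) = 4 * (P.card * B) := by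
    calc (m - 1) * (m - 2) * (m - 3) * (m - 4)
        = ((m - 1) * (m - 2)) * ((m - 3) * (m - 4)) := by ring
      _ = (P.card * 2) * (2 * B) := by rw [hP, hB]
      _ = 4 * (P.card * B) := by ring
  rw [hnum, Nat.mul_div_cancel_left _ (by norm_num)]
end

section
/- Let A be a commutative ring of characteristic 2 (e.g., the mod 2 cohomology of a space, concentrated so that all products commute), let s ≥ 2, and let x, y, z, w ∈ A satisfy x² = y² = xz = yz = yw = 0. In the s-fold tensor product algebra A^{⊗s}, writing u_{(i)} for the elementary tensor with u in the i-th slot and 1 elsewhere, one has (∏_{i=2}^{s} (x_{(1)} + x_{(i)})) · (∏_{i=2}^{s} (y_{(1)} + y_{(i)})) · (z_{(1)} + z_{(s)}) · (w_{(1)} + w_{(s)}) = zw ⊗ xy ⊗ xy ⊗ ⋯ ⊗ xy + xy ⊗ xy ⊗ ⋯ ⊗ xy ⊗ zw. -/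
open scoped TensorProduct

/-- Elementary tensor with `u` in slot `o` and `1` elsewhere. -/
private noncomputable def elemT {s : ℕ} {A : Type*} [CommRing A] [Algebra (ZMod 2) A]
    (u : A) (o : Fin s) : ⨂[ZMod 2] (_ : Fin s), A :=
  PiTensorProduct.tprod (ZMod 2) (fun j => if j = o then u else 1)

private lemma tprod_zero_entry {s : ℕ} {A : Type*} [CommRing A] [Algebra (ZMod 2) A]
    (g : Fin s → A) (i : Fin s) (h : g i = 0) :
    PiTensorProduct.tprod (ZMod 2) g = 0 :=
  MultilinearMap.map_coord_zero _ i h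

private lemma elemT_mul {s : ℕ} {A : Type*} [CommRing A] [Algebra (ZMod 2) A]
    (u : A) (o : Fin s) (g : Fin s → A) :
    elemT u o * PiTensorProduct.tprod (ZMod 2) g
      = PiTensorProduct.tprod (ZMod 2) (fun j => if j = o then u * g j else g j) := by
  rw [elemT, PiTensorProduct.tprod_mul_tprod]
  congr 1
  funext j
  by_cases hj : j = o <;> simp [Pi.mul_apply, hj]

/-- Key lemma: multiplying a tprod by `∏_{i∈S} (u₍ₒ₎ + u₍ᵢ₎)` when `u * g o = 0`. -/
private lemma prod_aux {s : ℕ} {A : Type*} [CommRing A] [Algebra (ZMod 2) A]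
    (u : A) (o : Fin s) (g : Fin s → A) (S : Finset (Fin s)) (hS : o ∉ S)
    (h : u * g o = 0) :
    (∏ i ∈ S, (elemT u o + elemT u i)) * PiTensorProduct.tprod (ZMod 2) g
      = PiTensorProduct.tprod (ZMod 2) (fun j => if j ∈ S then u * g j else g j) := by
  classical
  induction S using Finset.induction with
  | empty => simp
  | @insert a S ha ih =>
    have hoa : o ≠ a := fun hh => hS (hh ▸ Finset.mem_insert_self a S)
    have hoS : o ∉ S := fun hh => hS (Finset.mem_insert_of_mem hh)
    rw [Finset.prod_insert ha, mul_assoc, ih hoS, add_mul]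
    have h1 : elemT u o * PiTensorProduct.tprod (ZMod 2)
        (fun j => if j ∈ S then u * g j else g j) = 0 := by
      rw [elemT_mul]
      apply tprod_zero_entry _ o
      simp [hoS, h]
    have h2 : elemT u a * PiTensorProduct.tprod (ZMod 2)
        (fun j => if j ∈ S then u * g j else g j)
        = PiTensorProduct.tprod (ZMod 2)
          (fun j => if j ∈ insert a S then u * g j else g j) := by
      rw [elemT_mul]
      congr 1
      funext j
      by_cases hja : j = a
      · subst hja; simp [ha]
      · by_cases hjS : j ∈ S <;> simp [hja, hjS]
    rw [h1, h2, zero_add]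

private lemma main_aux {s : ℕ} {A : Type*} [CommRing A] [Algebra (ZMod 2) A]
    (one last : Fin s) (hol : one ≠ last) (x y z w : A)
    (hx : x ^ 2 = 0) (hy : y ^ 2 = 0) (hxz : x * z = 0) (hyz : y * z = 0)
    (hyw : y * w = 0) :
    (∏ i ∈ Finset.univ.filter (fun i : Fin s => i ≠ one), (elemT x one + elemT x i)) *
      (∏ i ∈ Finset.univ.filter (fun i : Fin s => i ≠ one), (elemT y one + elemT y i)) *
      (elemT z one + elemT z last) * (elemT w one + elemT w last)
      = PiTensorProduct.tprod (ZMod 2)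
          (fun j : Fin s => if j = one then z * w else x * y)
        + PiTensorProduct.tprod (ZMod 2)
            (fun j : Fin s => if j = last then z * w else x * y) := by
  classical
  have hlo : last ≠ one := fun h => hol h.symm
  set S : Finset (Fin s) := Finset.univ.filter (fun i : Fin s => i ≠ one) with hSdef
  have hoS : one ∉ S := by simp [hSdef]
  have hlS : last ∈ S := by simp [hSdef, hlo]
  have hoE : one ∉ S.erase last := fun h => hoS (Finset.mem_of_mem_erase h)
  have hmem : ∀ j : Fin s, j ∈ S ↔ j ≠ one := by simp [hSdef]
  have hmemE : ∀ j : Fin s, j ∈ S.erase last ↔ j ≠ last ∧ j ≠ one := by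
    intro j; simp [Finset.mem_erase, hmem]
  set T := fun g : Fin s → A => PiTensorProduct.tprod (ZMod 2) g with hT
  -- Step 1: the (z,w) part
  have m1 : elemT z one * elemT w one = T (fun j => if j = one then z * w else 1) := by
    rw [elemT, elemT, PiTensorProduct.tprod_mul_tprod]
    congr 1; funext j
    by_cases hj : j = one <;> simp [Pi.mul_apply, hj]
  have m2 : elemT z one * elemT w last
      = T (fun j => if j = one then z else if j = last then w else 1) := by
    rw [elemT, elemT, PiTensorProduct.tprod_mul_tprod]
    congr 1; funext j
    by_cases hj1 : j = one
    · simp [Pi.mul_apply, hj1, hol]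
    · by_cases hj2 : j = last <;> simp [Pi.mul_apply, hj1, hj2, hlo]
  have m3 : elemT z last * elemT w one
      = T (fun j => if j = one then w else if j = last then z else 1) := by
    rw [elemT, elemT, PiTensorProduct.tprod_mul_tprod]
    congr 1; funext j
    by_cases hj1 : j = one
    · simp [Pi.mul_apply, hj1, hol]
    · by_cases hj2 : j = last <;> simp [Pi.mul_apply, hj1, hj2, hlo]
  have m4 : elemT z last * elemT w last = T (fun j => if j = last then z * w else 1) := by
    rw [elemT, elemT, PiTensorProduct.tprod_mul_tprod]
    congr 1; funext j
    by_cases hj : j = last <;> simp [Pi.mul_apply, hj]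
  have hZW : (elemT z one + elemT z last) * (elemT w one + elemT w last)
      = T (fun j => if j = one then z * w else 1)
        + T (fun j => if j = one then z else if j = last then w else 1)
        + T (fun j => if j = one then w else if j = last then z else 1)
        + T (fun j => if j = last then z * w else 1) := by
    rw [add_mul, mul_add, mul_add, m1, m2, m3, m4]; abel
  -- decompose the y-product
  have hQsplit : (∏ i ∈ S, (elemT y one + elemT y i))
      = (elemT y one + elemT y last) * ∏ i ∈ S.erase last, (elemT y one + elemT y i) :=
    (Finset.mul_prod_erase S _ hlS).symm
  have hPsplit : (∏ i ∈ S, (elemT x one + elemT x i))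
      = (elemT x one + elemT x last) * ∏ i ∈ S.erase last, (elemT x one + elemT x i) :=
    (Finset.mul_prod_erase S _ hlS).symm
  have hyzw : y * (z * w) = 0 := by rw [← mul_assoc, hyz, zero_mul]
  have hxzw : x * (z * w) = 0 := by rw [← mul_assoc, hxz, zero_mul]
  -- Step 2: multiply by the y-product
  have hQ1 : (∏ i ∈ S, (elemT y one + elemT y i)) * T (fun j => if j = one then z * w else 1)
      = T (fun j => if j = one then z * w else y) := by
    rw [hT, prod_aux y one _ S hoS (by simp [hyzw])]
    congr 1; funext j
    by_cases hj : j = one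
    · simp [hj, hmem]
    · simp [hj, hmem]
  have hQ2 : (∏ i ∈ S, (elemT y one + elemT y i))
      * T (fun j => if j = one then z else if j = last then w else 1) = 0 := by
    rw [hQsplit, mul_comm (elemT y one + elemT y last), mul_assoc]
    have : (elemT y one + elemT y last)
        * T (fun j => if j = one then z else if j = last then w else 1) = 0 := by
      rw [add_mul, hT, elemT_mul, elemT_mul]
      rw [tprod_zero_entry _ one (by simp [hyz]),
        tprod_zero_entry _ last (by simp [hlo, hyw]), add_zero]
    rw [this, mul_zero]
  have hQ3 : (∏ i ∈ S, (elemT y one + elemT y i))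
      * T (fun j => if j = one then w else if j = last then z else 1) = 0 := by
    rw [hQsplit, mul_comm (elemT y one + elemT y last), mul_assoc]
    have : (elemT y one + elemT y last)
        * T (fun j => if j = one then w else if j = last then z else 1) = 0 := by
      rw [add_mul, hT, elemT_mul, elemT_mul]
      rw [tprod_zero_entry _ one (by simp [hyw]),
        tprod_zero_entry _ last (by simp [hlo, hyz]), add_zero]
    rw [this, mul_zero]
  have hQ4 : (∏ i ∈ S, (elemT y one + elemT y i)) * T (fun j => if j = last then z * w else 1)
      = T (fun j => if j = last then z * w else y) := by
    rw [hQsplit, mul_comm (elemT y one + elemT y last), mul_assoc]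
    have step1 : (elemT y one + elemT y last) * T (fun j => if j = last then z * w else 1)
        = T (fun j => if j = one then y else if j = last then z * w else 1) := by
      rw [add_mul, hT, elemT_mul, elemT_mul,
        tprod_zero_entry (fun j => if j = last then y * (if j = last then z * w else 1)
          else if j = last then z * w else 1) last (by simp [hyzw]), add_zero]
      congr 1; funext j
      by_cases hj1 : j = one
      · simp [hj1, hol, Ne.symm hol]
      · by_cases hj2 : j = last <;> simp [hj1, hj2, hlo]
    rw [step1, hT, prod_aux y one _ (S.erase last) hoE (by simp [Ne.symm hol, hy, ← sq])]
    congr 1; funext j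
    by_cases hj1 : j = one
    · simp [hj1, hmemE, hol, Ne.symm hol]
    · by_cases hj2 : j = last
      · simp [hj1, hj2, hmemE, hlo]
      · simp [hj1, hj2, hmemE, hlo]
  -- Step 3: multiply by the x-product
  have hP1 : (∏ i ∈ S, (elemT x one + elemT x i)) * T (fun j => if j = one then z * w else y)
      = T (fun j => if j = one then z * w else x * y) := by
    rw [hT, prod_aux x one _ S hoS (by simp [hxzw])]
    congr 1; funext j
    by_cases hj : j = one
    · simp [hj, hmem]
    · simp [hj, hmem]
  have hP2 : (∏ i ∈ S, (elemT x one + elemT x i)) * T (fun j => if j = last then z * w else y)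
      = T (fun j => if j = last then z * w else x * y) := by
    rw [hPsplit, mul_comm (elemT x one + elemT x last), mul_assoc]
    have step1 : (elemT x one + elemT x last) * T (fun j => if j = last then z * w else y)
        = T (fun j => if j = one then x * y else if j = last then z * w else y) := by
      rw [add_mul, hT, elemT_mul, elemT_mul,
        tprod_zero_entry (fun j => if j = last then x * (if j = last then z * w else y)
          else if j = last then z * w else y) last (by simp [hxzw]), add_zero]
      congr 1; funext j
      by_cases hj1 : j = one
      · simp [hj1, hol, Ne.symm hol]
      · by_cases hj2 : j = last <;> simp [hj1, hj2, hlo]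
    rw [step1, hT, prod_aux x one _ (S.erase last) hoE
      (by simp [Ne.symm hol]; rw [← mul_assoc, ← sq, hx, zero_mul])]
    congr 1; funext j
    by_cases hj1 : j = one
    · simp [hj1, hmemE, hol, Ne.symm hol]
    · by_cases hj2 : j = last
      · simp [hj1, hj2, hmemE, hlo]
      · simp [hj1, hj2, hmemE, hlo]
  calc (∏ i ∈ S, (elemT x one + elemT x i)) * (∏ i ∈ S, (elemT y one + elemT y i)) *
      (elemT z one + elemT z last) * (elemT w one + elemT w last)
      = (∏ i ∈ S, (elemT x one + elemT x i)) *
        ((∏ i ∈ S, (elemT y one + elemT y i)) * T (fun j => if j = one then z * w else 1)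
        + (∏ i ∈ S, (elemT y one + elemT y i))
            * T (fun j => if j = one then z else if j = last then w else 1)
        + (∏ i ∈ S, (elemT y one + elemT y i))
            * T (fun j => if j = one then w else if j = last then z else 1)
        + (∏ i ∈ S, (elemT y one + elemT y i)) * T (fun j => if j = last then z * w else 1)) := by
        rw [mul_assoc, mul_assoc, hZW]; ring
    _ = (∏ i ∈ S, (elemT x one + elemT x i)) *
        (T (fun j => if j = one then z * w else y) + T (fun j => if j = last then z * w else y)) := by
        rw [hQ1, hQ2, hQ3, hQ4, add_zero, add_zero]
    _ = _ := by rw [mul_add, hP1, hP2]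

open scoped TensorProduct in
/-- Knudsen-style product formula in the `s`-fold tensor power of a commutative
`𝔽₂`-algebra `A`: if `x² = y² = xz = yz = yw = 0`, then
`(∏ᵢ (x₍₁₎+x₍ᵢ₎)) (∏ᵢ (y₍₁₎+y₍ᵢ₎)) (z₍₁₎+z₍ₛ₎) (w₍₁₎+w₍ₛ₎)
  = zw ⊗ xy ⊗ ⋯ ⊗ xy + xy ⊗ ⋯ ⊗ xy ⊗ zw`. -/
theorem stmt_8 {A : Type*} [CommRing A] [Algebra (ZMod 2) A]
    (s : ℕ) (hs : 2 ≤ s) (x y z w : A)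
    (hx : x ^ 2 = 0) (hy : y ^ 2 = 0) (hxz : x * z = 0) (hyz : y * z = 0)
    (hyw : y * w = 0) :
    letI e : A → Fin s → ⨂[ZMod 2] (_ : Fin s), A :=
      fun u i => PiTensorProduct.tprod (ZMod 2) (fun j => if j = i then u else 1)
    letI one : Fin s := ⟨0, by omega⟩
    letI last : Fin s := ⟨s - 1, by omega⟩
    (∏ i ∈ Finset.univ.filter (fun i : Fin s => i ≠ one), (e x one + e x i)) *
      (∏ i ∈ Finset.univ.filter (fun i : Fin s => i ≠ one), (e y one + e y i)) *
      (e z one + e z last) * (e w one + e w last)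
      = PiTensorProduct.tprod (ZMod 2)
          (fun j : Fin s => if j = one then z * w else x * y)
        + PiTensorProduct.tprod (ZMod 2)
            (fun j : Fin s => if j = last then z * w else x * y) := by
  exact main_aux ⟨0, by omega⟩ ⟨s - 1, by omega⟩
    (by simp only [ne_eq, Fin.mk.injEq]; omega) x y z w hx hy hxz hyz hyw
end
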